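/- Let (Ω, Σ, P) be a probability space, let k be a positive integer, let f : (a,b) → ℝ be a 2k-times differentiable function with f^(2k)(x) ≥ 0 for every x ∈ (a,b), and let X : Ω → (a,b) be an integrable random variable such that f(X) and (X − E[X])^i are integrable for 1 ≤ i ≤ 2k−1. Then ∑_{i=1}^{2k−1} (1/i!) · f^(i)(E[X]) · E[(X − E[X])^i] ≤ E[f(X)] − f(E[X]). -/

import Mathlib

open MeasureTheory ProbabilityTheory Finset

private lemma nonneg_of_second_deriv {S : Set ℝ} (hS : Convex ℝ S) (hSo : IsOpen S)
    {h h' h'' : ℝ → ℝ}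
    (hd1 : ∀ x ∈ S, HasDerivAt h (h' x) x)
    (hd2 : ∀ x ∈ S, HasDerivAt h' (h'' x) x)
    (hnn : ∀ x ∈ S, 0 ≤ h'' x)
    {μ : ℝ} (hμ : μ ∈ S) (h0 : h μ = 0) (h0' : h' μ = 0) :
    ∀ x ∈ S, 0 ≤ h x := by
  have hmono : MonotoneOn h' S := by
    apply monotoneOn_of_deriv_nonneg hS
    · exact fun x hx => (hd2 x hx).continuousAt.continuousWithinAt
    · intro x hx
      rw [hSo.interior_eq] at hx
      exact ((hd2 x hx).differentiableAt).differentiableWithinAt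
    · intro x hx
      rw [hSo.interior_eq] at hx
      rw [(hd2 x hx).deriv]; exact hnn x hx
  intro x hx
  rcases le_total μ x with hle | hle
  · have hsub : Set.Icc μ x ⊆ S := hS.ordConnected.out hμ hx
    have hm : MonotoneOn h (Set.Icc μ x) := by
      apply monotoneOn_of_deriv_nonneg (convex_Icc μ x)
      · exact fun y hy => (hd1 y (hsub hy)).continuousAt.continuousWithinAt
      · intro y hy
        rw [interior_Icc] at hy
        exact ((hd1 y (hsub (Set.Ioo_subset_Icc_self hy))).differentiableAt).differentiableWithinAt
      · intro y hy
        rw [interior_Icc] at hy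
        have hyS : y ∈ S := hsub (Set.Ioo_subset_Icc_self hy)
        rw [(hd1 y hyS).deriv]
        have := hmono hμ hyS hy.1.le
        rwa [h0'] at this
    have := hm (Set.left_mem_Icc.2 hle) (Set.right_mem_Icc.2 hle) hle
    rwa [h0] at this
  · have hsub : Set.Icc x μ ⊆ S := hS.ordConnected.out hx hμ
    have hm : AntitoneOn h (Set.Icc x μ) := by
      apply antitoneOn_of_deriv_nonpos (convex_Icc x μ)
      · exact fun y hy => (hd1 y (hsub hy)).continuousAt.continuousWithinAt
      · intro y hy
        rw [interior_Icc] at hy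
        exact ((hd1 y (hsub (Set.Ioo_subset_Icc_self hy))).differentiableAt).differentiableWithinAt
      · intro y hy
        rw [interior_Icc] at hy
        have hyS : y ∈ S := hsub (Set.Ioo_subset_Icc_self hy)
        rw [(hd1 y hyS).deriv]
        have := hmono hyS hμ hy.2.le
        rwa [h0'] at this
    have := hm (Set.left_mem_Icc.2 hle) (Set.right_mem_Icc.2 hle) hle
    rwa [h0] at this

private lemma nonneg_of_even_deriv {S : Set ℝ} (hS : Convex ℝ S) (hSo : IsOpen S)
    (n : ℕ) (g : ℕ → ℝ → ℝ)
    (hderiv : ∀ i < 2 * n, ∀ x ∈ S, HasDerivAt (g i) (g (i + 1) x) x)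
    (hnn : ∀ x ∈ S, 0 ≤ g (2 * n) x)
    {μ : ℝ} (hμ : μ ∈ S) (h0 : ∀ i < 2 * n, g i μ = 0) :
    ∀ x ∈ S, 0 ≤ g 0 x := by
  induction n with
  | zero => simpa using hnn
  | succ m ih =>
    refine ih (fun i hi x hx => hderiv i (by omega) x hx) ?_ (fun i hi => h0 i (by omega))
    intro x hx
    have e1 : 2 * (m + 1) = 2 * m + 1 + 1 := by ring
    refine nonneg_of_second_deriv hS hSo (h := g (2 * m)) (h' := g (2 * m + 1))
      (h'' := g (2 * m + 1 + 1)) (fun y hy => hderiv (2 * m) (by omega) y hy)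
      (fun y hy => hderiv (2 * m + 1) (by omega) y hy)
      (fun y hy => by rw [← e1]; exact hnn y hy) hμ
      (h0 (2 * m) (by omega)) (h0 (2 * m + 1) (by omega)) x hx

theorem jensen_gap_higher_order_lower
    {Ω : Type*} [MeasurableSpace Ω] (P : Measure Ω) [IsProbabilityMeasure P]
    (a b : EReal) (hab : a < b) (k : ℕ) (hk : 0 < k)
    (f : ℝ → ℝ) (fd : ℕ → ℝ → ℝ) (hfd0 : fd 0 = f)
    (hderiv : ∀ i < 2 * k, ∀ x : ℝ, a < (x : EReal) → (x : EReal) < b →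
      HasDerivAt (fd i) (fd (i + 1) x) x)
    (hnonneg : ∀ x : ℝ, a < (x : EReal) → (x : EReal) < b → 0 ≤ fd (2 * k) x)
    (X : Ω → ℝ)
    (hX : ∀ ω, a < (X ω : EReal) ∧ (X ω : EReal) < b)
    (hXint : Integrable X P)
    (hfXint : Integrable (fun ω => f (X ω)) P)
    (hmom : ∀ i ∈ Finset.Icc 1 (2 * k - 1),
      Integrable (fun ω => (X ω - ∫ ω', X ω' ∂P) ^ i) P) :
    ∑ i ∈ Finset.Icc 1 (2 * k - 1),
        (1 / (Nat.factorial i : ℝ)) * fd i (∫ ω, X ω ∂P) *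
          (∫ ω, (X ω - ∫ ω', X ω' ∂P) ^ i ∂P)
      ≤ (∫ ω, f (X ω) ∂P) - f (∫ ω, X ω ∂P) := by
  have hne : Nonempty Ω := by
    by_contra h
    rw [not_nonempty_iff] at h
    have h1 : P Set.univ = 1 := measure_univ
    rw [Set.univ_eq_empty_iff.2 h, measure_empty] at h1
    simp at h1
  set μ := ∫ ω, X ω ∂P with hμdef
  set S : Set ℝ := Real.toEReal ⁻¹' (Set.Ioo a b) with hSdef
  have hSo : IsOpen S := isOpen_Ioo.preimage continuous_coe_real_ereal
  have hSc : Convex ℝ S := by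
    refine Set.OrdConnected.convex ⟨fun x hx y hy z hz => ?_⟩
    exact ⟨lt_of_lt_of_le hx.1 (EReal.coe_le_coe_iff.2 hz.1),
      lt_of_le_of_lt (EReal.coe_le_coe_iff.2 hz.2) hy.2⟩
  have hXS : ∀ ω, X ω ∈ S := fun ω => ⟨(hX ω).1, (hX ω).2⟩
  -- μ ∈ S
  have hμS : μ ∈ S := by
    constructor
    · -- a < μ
      induction a with
      | bot => exact bot_lt_iff_ne_bot.2 (EReal.coe_ne_bot μ)
      | coe r =>
        rw [EReal.coe_lt_coe_iff]
        have hlt : ∀ ω, r < X ω := fun ω => EReal.coe_lt_coe_iff.1 (hX ω).1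
        have hpos : 0 < ∫ ω, (X ω - r) ∂P := by
          have hi : Integrable (fun ω => X ω - r) P := hXint.sub (integrable_const r)
          rw [integral_pos_iff_support_of_nonneg
            (fun ω => by simpa using (hlt ω).le) hi]
          have : Function.support (fun ω => X ω - r) = Set.univ := by
            ext ω; simpa using (sub_ne_zero.2 (hlt ω).ne')
          rw [this, measure_univ]; norm_num
        rw [integral_sub hXint (integrable_const r), integral_const] at hpos
        simp at hpos
        linarith
      | top => exact absurd (hX (Classical.arbitrary Ω)).1 (by simp)
    · -- μ < b
      induction b with
      | bot => exact absurd (hX (Classical.arbitrary Ω)).2 (by simp)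
      | coe r =>
        rw [EReal.coe_lt_coe_iff]
        have hlt : ∀ ω, X ω < r := fun ω => EReal.coe_lt_coe_iff.1 (hX ω).2
        have hpos : 0 < ∫ ω, (r - X ω) ∂P := by
          have hi : Integrable (fun ω => r - X ω) P := (integrable_const r).sub hXint
          rw [integral_pos_iff_support_of_nonneg
            (fun ω => by simpa using (hlt ω).le) hi]
          have : Function.support (fun ω => r - X ω) = Set.univ := by
            ext ω; simpa using (sub_ne_zero.2 (hlt ω).ne')
          rw [this, measure_univ]; norm_num
        rw [integral_sub (integrable_const r) hXint, integral_const] at hpos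
        simp at hpos
        linarith
      | top => exact lt_top_iff_ne_top.2 (EReal.coe_ne_top μ)
  -- the auxiliary functions
  set g : ℕ → ℝ → ℝ := fun i x =>
    fd i x - ∑ j ∈ Finset.range (2 * k - i), fd (i + j) μ / (Nat.factorial j : ℝ) * (x - μ) ^ j
    with hgdef
  have hgd : ∀ i < 2 * k, ∀ x ∈ S, HasDerivAt (g i) (g (i + 1) x) x := by
    intro i hi x hx
    have hsum : HasDerivAt
        (fun y => ∑ j ∈ Finset.range (2 * k - i),
          fd (i + j) μ / (Nat.factorial j : ℝ) * (y - μ) ^ j)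
        (∑ j ∈ Finset.range (2 * k - i),
          fd (i + j) μ / (Nat.factorial j : ℝ) * ((j : ℝ) * (x - μ) ^ (j - 1))) x := by
      refine HasDerivAt.fun_sum fun j hj => ?_
      have h1 : HasDerivAt (fun y => (y - μ) ^ j) ((j : ℝ) * (x - μ) ^ (j - 1)) x := by
        simpa using (((hasDerivAt_id x).sub_const μ).fun_pow j)
      exact h1.const_mul _
    have hfdd : HasDerivAt (fd i) (fd (i + 1) x) x := hderiv i hi x hx.1 hx.2
    have heq : ∑ j ∈ Finset.range (2 * k - i),
          fd (i + j) μ / (Nat.factorial j : ℝ) * ((j : ℝ) * (x - μ) ^ (j - 1))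
        = ∑ j ∈ Finset.range (2 * k - (i + 1)),
          fd (i + 1 + j) μ / (Nat.factorial j : ℝ) * (x - μ) ^ j := by
      have h2 : 2 * k - i = (2 * k - (i + 1)) + 1 := by omega
      rw [h2, Finset.sum_range_succ']
      simp only [Nat.cast_zero, pow_zero]
      rw [show (fd (i + 0) μ / (Nat.factorial 0 : ℝ) * ((0:ℝ) * (x - μ) ^ (0 - 1))) = 0 by ring]
      rw [add_zero]
      refine Finset.sum_congr rfl fun j hj => ?_
      have : i + (j + 1) = i + 1 + j := by ring
      rw [this, Nat.factorial_succ, Nat.add_sub_cancel]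
      push_cast
      have hfac : (Nat.factorial j : ℝ) ≠ 0 := Nat.cast_ne_zero.2 (Nat.factorial_ne_zero j)
      field_simp
    have := hfdd.sub hsum
    rw [heq] at this
    exact this
  have hg2k : ∀ x, g (2 * k) x = fd (2 * k) x := by
    intro x; simp [hgdef]
  have hg0 : ∀ i < 2 * k, g i μ = 0 := by
    intro i hi
    simp only [hgdef]
    have h2 : 2 * k - i = (2 * k - (i + 1)) + 1 := by omega
    rw [h2, Finset.sum_range_succ']
    simp [Nat.factorial_ne_zero]
  have hpt : ∀ x ∈ S, 0 ≤ g 0 x :=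
    nonneg_of_even_deriv hSc hSo k g hgd
      (fun x hx => (hg2k x) ▸ hnonneg x hx.1 hx.2) hμS hg0
  -- pointwise inequality with the Icc sum
  have hset : Finset.range (2 * k) = insert 0 (Finset.Icc 1 (2 * k - 1)) := by
    ext j
    simp only [Finset.mem_range, Finset.mem_insert, Finset.mem_Icc]
    omega
  have hptw : ∀ ω, ∑ i ∈ Finset.Icc 1 (2 * k - 1),
      fd i μ / (Nat.factorial i : ℝ) * (X ω - μ) ^ i ≤ f (X ω) - f μ := by
    intro ω
    have h := hpt (X ω) (hXS ω)
    simp only [hgdef, Nat.sub_zero] at h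
    rw [hset, Finset.sum_insert (by simp)] at h
    simp only [zero_add, Nat.factorial_zero, Nat.cast_one, pow_zero, hfd0] at h
    linarith [h]
  -- integrate
  have hint1 : Integrable (fun ω => ∑ i ∈ Finset.Icc 1 (2 * k - 1),
      fd i μ / (Nat.factorial i : ℝ) * (X ω - μ) ^ i) P := by
    apply integrable_finset_sum
    intro i hi
    exact (hmom i hi).const_mul _
  have hint2 : Integrable (fun ω => f (X ω) - f μ) P := hfXint.sub (integrable_const _)
  have hInt := integral_mono hint1 hint2 hptw
  rw [integral_finset_sum _ (fun i hi => (hmom i hi).const_mul _)] at hInt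
  rw [integral_sub hfXint (integrable_const _), integral_const] at hInt
  simp only [measureReal_def, measure_univ, ENNReal.toReal_one, one_smul] at hInt
  calc ∑ i ∈ Finset.Icc 1 (2 * k - 1),
        (1 / (Nat.factorial i : ℝ)) * fd i μ * (∫ ω, (X ω - μ) ^ i ∂P)
      = ∑ i ∈ Finset.Icc 1 (2 * k - 1),
        ∫ ω, fd i μ / (Nat.factorial i : ℝ) * (X ω - μ) ^ i ∂P := by
        refine Finset.sum_congr rfl fun i hi => ?_
        rw [integral_const_mul]
        ring
    _ ≤ (∫ ω, f (X ω) ∂P) - f μ := hInt
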